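/- Let κ be a finite index set with an involution k ↦ k*, let ρ = diag(ρ₁,…,ρ_n) with ρ_i > 0, and let (L_k)_{k∈κ} be a family of n×n complex matrices. Suppose u = (u_{kℓ})_{k,ℓ∈κ} is a complex matrix that is both unitary and symmetric (uᵀ = u) and satisfies ρ^{1/2} L_k† = Σ_ℓ u_{kℓ} L_ℓ ρ^{1/2} for every k ∈ κ. Then there exist a unitary κ×κ matrix v and a family of n×n matrices (J_a)_{a∈κ} such that L_k = Σ_a v_{ka} J_a for all k and ρ^{1/2} J_k† = J_{k*} ρ^{1/2} for all k ∈ κ; consequently ρ_i·|(J_k)_{ji}|² = ρ_j·|(J_{k*})_{ij}|² for all indices i, j and all k ∈ κ, i.e. the new representation has vanishing quantum entropy production rate. -/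

import Mathlib

open Matrix BigOperators

noncomputable section

lemma exists_real_structure {κ : Type*} [Fintype κ] [DecidableEq κ]
    (u : Matrix κ κ ℂ) (hu : uᴴ * u = 1) (hsymm : uᵀ = u) :
    ∃ H : Matrix κ κ ℂ, Hᴴ * H = 1 ∧ ∀ k a, (u * H) k a = star (H k a) := by
  classical
  have huu : u * uᴴ = 1 := by rw [mul_eq_one_comm] at hu; exact hu
  set σ : EuclideanSpace ℂ κ → EuclideanSpace ℂ κ :=
    fun x => WithLp.toLp 2 (uᴴ.mulVec (star (x : κ → ℂ))) with hσ
  have hσσ : ∀ x, σ (σ x) = x := by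
    intro x
    show WithLp.toLp 2 (uᴴ.mulVec (star (uᴴ.mulVec (star (x : κ → ℂ))))) = x
    rw [Matrix.star_mulVec, star_star, conjTranspose_conjTranspose,
      Matrix.mulVec_vecMul, ← hsymm, Matrix.transpose_transpose, hsymm, hu, Matrix.one_mulVec]
  have hσ_add : ∀ x y, σ (x + y) = σ x + σ y := by
    intro x y
    show WithLp.toLp 2 (uᴴ.mulVec (star ((x : κ → ℂ) + y))) = _
    rw [star_add, Matrix.mulVec_add, WithLp.toLp_add]
  have hσ_smul : ∀ (c : ℂ) (x : EuclideanSpace ℂ κ), σ (c • x) = (starRingEnd ℂ c) • σ x := by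
    intro c x
    show WithLp.toLp 2 (uᴴ.mulVec (star (c • (x : κ → ℂ)))) = _
    rw [star_smul, Matrix.mulVec_smul, WithLp.toLp_smul]
    rfl
  have hσ_rsmul : ∀ (r : ℝ) (x : EuclideanSpace ℂ κ), σ (r • x) = r • σ x := by
    intro r x
    have key : ∀ y : EuclideanSpace ℂ κ, (r : ℂ) • y = r • y := by
      intro y; ext k; simp [Complex.real_smul]
    rw [← key x, hσ_smul, Complex.conj_ofReal, key (σ x)]
  have hσ0 : σ 0 = 0 := by
    have := hσ_rsmul 0 0; simpa using this
  -- inner product facts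
  have hx : ∀ a b : EuclideanSpace ℂ κ, (inner ℂ a b) = star (a : κ → ℂ) ⬝ᵥ (b : κ → ℂ) := by
    intro a b; simp [PiLp.inner_apply, RCLike.inner_apply, dotProduct, mul_comm]
  have hre : ∀ x y : EuclideanSpace ℂ κ, (inner ℝ x y) = Complex.re (inner ℂ x y) := by
    intro x y; simp [PiLp.inner_apply, RCLike.inner_apply, Complex.re_sum]
  have hinner : ∀ x y : EuclideanSpace ℂ κ, (inner ℂ (σ x) (σ y)) = inner ℂ y x := by
    intro x y
    rw [hx, hx]
    show star (uᴴ *ᵥ star (x : κ → ℂ)) ⬝ᵥ (uᴴ *ᵥ star (y : κ → ℂ)) = _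
    rw [Matrix.star_mulVec, star_star, conjTranspose_conjTranspose,
      Matrix.dotProduct_mulVec, Matrix.vecMul_vecMul, huu, Matrix.vecMul_one,
      dotProduct_comm]
  -- the real subspace
  set V : Submodule ℝ (EuclideanSpace ℂ κ) :=
    { carrier := {x | σ x = x}
      add_mem' := by
        intro x y hx' hy'
        simp only [Set.mem_setOf_eq] at *
        rw [hσ_add, hx', hy']
      zero_mem' := hσ0
      smul_mem' := by
        intro r x hx'
        simp only [Set.mem_setOf_eq] at *
        rw [hσ_rsmul, hx'] } with hV
  have memV : ∀ x : EuclideanSpace ℂ κ, x ∈ V ↔ σ x = x := fun x => Iff.rfl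
  -- dimension count
  let f : (V × V) →ₗ[ℝ] EuclideanSpace ℂ κ :=
    { toFun := fun p => (p.1 : EuclideanSpace ℂ κ) + (Complex.I • (p.2 : EuclideanSpace ℂ κ))
      map_add' := by
        intro p q
        simp only [Submodule.coe_add, Prod.fst_add, Prod.snd_add, smul_add]
        abel
      map_smul' := by
        intro r p
        simp only [Prod.smul_fst, Prod.smul_snd, SetLike.val_smul, RingHom.id_apply, smul_add,
          smul_comm r Complex.I] }
  have hf_inj : Function.Injective f := by
    rw [← LinearMap.ker_eq_bot, LinearMap.ker_eq_bot']
    intro p hp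
    have h1 : (p.1 : EuclideanSpace ℂ κ) + Complex.I • (p.2 : EuclideanSpace ℂ κ) = 0 := hp
    have h2 : (p.1 : EuclideanSpace ℂ κ) - Complex.I • (p.2 : EuclideanSpace ℂ κ) = 0 := by
      have := congrArg σ h1
      rw [hσ_add, hσ_smul, (memV _).mp p.1.2, (memV _).mp p.2.2, Complex.conj_I, hσ0,
        neg_smul] at this
      linear_combination (norm := module) this
    have hp1 : (p.1 : EuclideanSpace ℂ κ) = 0 := by
      have hdouble : (p.1 : EuclideanSpace ℂ κ) + (p.1 : EuclideanSpace ℂ κ) = 0 := by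
        linear_combination (norm := module) h1 + h2
      have h2s : (2 : ℝ) • (p.1 : EuclideanSpace ℂ κ) = 0 := by
        rw [two_smul]; exact hdouble
      rcases smul_eq_zero.mp h2s with h | h
      · norm_num at h
      · exact h
    have hp2 : (p.2 : EuclideanSpace ℂ κ) = 0 := by
      have hI : Complex.I • (p.2 : EuclideanSpace ℂ κ) = 0 := by
        rw [hp1, zero_add] at h1; exact h1
      rcases smul_eq_zero.mp hI with h | h
      · exact absurd h Complex.I_ne_zero
      · exact h
    exact Prod.ext (Subtype.ext hp1) (Subtype.ext hp2)
  have hf_surj : Function.Surjective f := by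
    intro z
    have ha : σ ((2⁻¹ : ℝ) • (z + σ z)) = (2⁻¹ : ℝ) • (z + σ z) := by
      rw [hσ_rsmul, hσ_add, hσσ, add_comm]
    have hsub : σ (z - σ z) = σ z - z := by
      have h3 := hσ_add (z - σ z) (σ z)
      rw [sub_add_cancel, hσσ] at h3
      linear_combination (norm := module) -h3
    have hb : σ ((2⁻¹ : ℝ) • ((-Complex.I) • (z - σ z))) =
        (2⁻¹ : ℝ) • ((-Complex.I) • (z - σ z)) := by
      rw [hσ_rsmul, hσ_smul, hsub]
      rw [show (starRingEnd ℂ) (-Complex.I) = Complex.I by simp]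
      congr 1
      rw [smul_sub, smul_sub, neg_smul, neg_smul]
      module
    refine ⟨(⟨_, ha⟩, ⟨_, hb⟩), ?_⟩
    show (2⁻¹ : ℝ) • (z + σ z) + Complex.I • ((2⁻¹ : ℝ) • ((-Complex.I) • (z - σ z))) = z
    rw [smul_comm (Complex.I) ((2⁻¹ : ℝ)), smul_smul, mul_neg, Complex.I_mul_I, neg_neg, one_smul]
    rw [smul_add, smul_sub]
    module
  have hdimE : Module.finrank ℝ (EuclideanSpace ℂ κ) = 2 * Fintype.card κ := by
    have e1 : EuclideanSpace ℂ κ ≃ₗ[ℝ] (κ → ℂ) :=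
      (WithLp.linearEquiv 2 ℂ (κ → ℂ)).restrictScalars ℝ
    rw [e1.finrank_eq, Module.finrank_pi_fintype]
    simp [Complex.finrank_real_complex, mul_comm]
  have hdim : Module.finrank ℝ V = Fintype.card κ := by
    have e2 : (V × V) ≃ₗ[ℝ] EuclideanSpace ℂ κ := LinearEquiv.ofBijective f ⟨hf_inj, hf_surj⟩
    have h4 := e2.finrank_eq
    rw [Module.finrank_prod, hdimE] at h4
    omega
  -- orthonormal basis of V
  let e3 : Fin (Module.finrank ℝ V) ≃ κ := (finCongr hdim).trans (Fintype.equivFin κ).symm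
  let bb : OrthonormalBasis κ ℝ V := (stdOrthonormalBasis ℝ V).reindex e3
  have hbb := bb.orthonormal
  rw [orthonormal_iff_ite] at hbb
  set h : κ → EuclideanSpace ℂ κ := fun a => ((bb a : EuclideanSpace ℂ κ)) with hh
  have hmem : ∀ a, σ (h a) = h a := fun a => (memV _).mp (bb a).2
  have horth : ∀ a b, (inner ℂ (h a) (h b)) = if a = b then 1 else 0 := by
    intro a b
    have hreal : (inner ℂ (h a) (h b)) = (inner ℂ (h b) (h a)) := by
      rw [← hinner, hmem, hmem]
    have him : (inner ℂ (h a) (h b)) = Complex.re (inner ℂ (h a) (h b)) := by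
      rw [← inner_conj_symm (h b) (h a)] at hreal
      exact (Complex.conj_eq_iff_re.mp hreal.symm).symm
    have hbb' : (inner ℝ (h a) (h b)) = if a = b then 1 else 0 := by
      have := hbb a b
      rw [Submodule.coe_inner] at this
      exact this
    rw [him, ← hre, hbb']
    split <;> simp
  refine ⟨Matrix.of (fun k a => h a k), ?_, ?_⟩
  · ext a b
    rw [Matrix.mul_apply, Matrix.one_apply]
    have h2 : ∀ k, (Matrix.of (fun k a => h a k))ᴴ a k * (Matrix.of (fun k a => h a k)) k b
        = star (h a k) * h b k := by
      intro k; rw [Matrix.conjTranspose_apply, Matrix.of_apply, Matrix.of_apply]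
    rw [Finset.sum_congr rfl (fun k _ => h2 k)]
    rw [← horth a b, hx]
    rfl
  · intro k a
    have hcol : u *ᵥ (fun ℓ => h a ℓ) = fun ℓ => star (h a ℓ) := by
      have h1 : uᴴ *ᵥ (star (h a : κ → ℂ)) = (h a : κ → ℂ) := congrArg WithLp.ofLp (hmem a)
      have h5 := congrArg (fun w => u *ᵥ w) h1
      simp only [Matrix.mulVec_mulVec, huu, Matrix.one_mulVec] at h5
      exact h5.symm
    have h6 : (u * Matrix.of (fun k a => h a k)) k a = (u *ᵥ (fun ℓ => h a ℓ)) k := by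
      simp [Matrix.mul_apply, Matrix.mulVec, dotProduct]
    rw [h6, hcol]
    rfl


lemma sum_delta_mul {κ : Type*} [Fintype κ] [DecidableEq κ] (x y : κ) (A B : ℂ) :
    ∑ k, (if k = x then A else 0) * (if k = y then B else 0) = if x = y then A * B else 0 := by
  classical
  have hterm : ∀ k, (if k = x then A else 0) * (if k = y then B else 0)
      = if k = x then (if x = y then A * B else 0) else 0 := by
    intro k
    by_cases h1 : k = x
    · subst h1
      by_cases h2 : k = y
      · subst h2; simp
      · simp [h2]
    · simp [h1]
  rw [Finset.sum_congr rfl (fun k _ => hterm k)]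
  simp

lemma exists_pair_matrix {κ : Type*} [Fintype κ] [DecidableEq κ]
    (invol : κ → κ) (hinvol : ∀ k, invol (invol k) = k) :
    ∃ c : Matrix κ κ ℂ, cᴴ * c = 1 ∧ ∀ k a, star (c k a) = c k (invol a) := by
  classical
  set f := Fintype.equivFin κ with hf
  set rc : ℂ := (((Real.sqrt 2)⁻¹ : ℝ) : ℂ) with hrc
  have hrc_conj : (starRingEnd ℂ) rc = rc := by
    rw [hrc]; exact Complex.conj_ofReal _
  have hrc2 : rc * rc = 2⁻¹ := by
    rw [hrc, ← Complex.ofReal_mul, ← mul_inv, Real.mul_self_sqrt (by norm_num : (0:ℝ) ≤ 2)]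
    norm_num
  set α : κ → ℂ := fun a =>
    if invol a = a then 2⁻¹ else if (f a : ℕ) < f (invol a) then rc else -Complex.I * rc with hα
  set β : κ → ℂ := fun a =>
    if invol a = a then 2⁻¹ else if (f a : ℕ) < f (invol a) then Complex.I * rc else rc with hβ
  have hne : ∀ a, invol a ≠ a →
      (((f a : ℕ) < f (invol a)) ↔ ¬ ((f (invol a) : ℕ) < f (invol (invol a)))) := by
    intro a ha
    rw [hinvol]
    constructor
    · intro h; omega
    · intro h
      have : (f (invol a) : ℕ) ≠ f a := by
        intro hc
        exact ha (f.injective (Fin.ext hc))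
      omega
  have hconjα : ∀ a, star (α a) = β (invol a) := by
    intro a
    by_cases hfix : invol a = a
    · simp only [hα, hβ]
      simp only [hfix, hinvol, if_pos rfl]
      simp
    · have hfix' : invol (invol a) ≠ invol a := by
        rw [hinvol]; exact fun hc => hfix hc.symm
      simp only [hα, hβ]
      rw [if_neg hfix, if_neg hfix']
      by_cases hp : (f a : ℕ) < f (invol a)
      · have hq : ¬ ((f (invol a) : ℕ) < f (invol (invol a))) := (hne a hfix).mp hp
        rw [if_pos hp, if_neg hq]
        exact hrc_conj
      · have hq : ((f (invol a) : ℕ) < f (invol (invol a))) := by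
          by_contra hc
          exact hp ((hne a hfix).mpr hc)
        rw [if_neg hp, if_pos hq]
        simp only [Complex.star_def, _root_.map_mul, map_neg, Complex.conj_I, hrc_conj]
        try ring
  have hconjβ : ∀ a, star (β a) = α (invol a) := by
    intro a
    by_cases hfix : invol a = a
    · simp only [hα, hβ]
      simp only [hfix, hinvol, if_pos rfl]
      simp
    · have hfix' : invol (invol a) ≠ invol a := by
        rw [hinvol]; exact fun hc => hfix hc.symm
      simp only [hα, hβ]
      rw [if_neg hfix, if_neg hfix']
      by_cases hp : (f a : ℕ) < f (invol a)
      · have hq : ¬ ((f (invol a) : ℕ) < f (invol (invol a))) := (hne a hfix).mp hp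
        rw [if_pos hp, if_neg hq]
        simp only [Complex.star_def, _root_.map_mul, Complex.conj_I, hrc_conj]
        try ring
      · have hq : ((f (invol a) : ℕ) < f (invol (invol a))) := by
          by_contra hc
          exact hp ((hne a hfix).mpr hc)
        rw [if_neg hp, if_pos hq]
        exact hrc_conj
  set c : Matrix κ κ ℂ := Matrix.of (fun k a =>
    (if k = a then α a else 0) + (if k = invol a then β a else 0)) with hc
  clear_value rc α β c
  refine ⟨c, ?_, ?_⟩
  · ext a b
    rw [Matrix.mul_apply, Matrix.one_apply]
    have hterm : ∀ k, cᴴ a k * c k b =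
        (if k = a then star (α a) else 0) * (if k = b then α b else 0)
      + (if k = a then star (α a) else 0) * (if k = invol b then β b else 0)
      + ((if k = invol a then star (β a) else 0) * (if k = b then α b else 0)
      + (if k = invol a then star (β a) else 0) * (if k = invol b then β b else 0)) := by
      intro k
      rw [Matrix.conjTranspose_apply, hc]
      simp only [Matrix.of_apply, star_add, apply_ite (star : ℂ → ℂ), star_zero]
      ring
    rw [Finset.sum_congr rfl (fun k _ => hterm k)]
    rw [Finset.sum_add_distrib, Finset.sum_add_distrib, Finset.sum_add_distrib,
      sum_delta_mul, sum_delta_mul, sum_delta_mul, sum_delta_mul]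
    have hinj : (invol a = invol b) ↔ (a = b) := by
      constructor
      · intro h; have := congrArg invol h; rwa [hinvol, hinvol] at this
      · intro h; rw [h]
    by_cases hab : a = b
    · subst hab
      rw [if_pos rfl, if_pos rfl, if_pos rfl]
      by_cases hfix : invol a = a
      · rw [if_pos hfix.symm, if_pos hfix]
        simp only [hα, hβ]
        simp only [if_pos hfix]
        simp only [Complex.star_def, map_inv₀, map_ofNat]
        norm_num
      · rw [if_neg (fun h => hfix h.symm), if_neg hfix]
        simp only [hα, hβ]
        simp only [if_neg hfix]
        by_cases hp : (f a : ℕ) < f (invol a)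
        · rw [if_pos hp, if_pos hp]
          simp only [Complex.star_def, _root_.map_mul, Complex.conj_I, hrc_conj]
          linear_combination (2:ℂ) * hrc2 + (-(rc*rc)) * Complex.I_sq
        · rw [if_neg hp, if_neg hp]
          simp only [Complex.star_def, _root_.map_mul, map_neg, Complex.conj_I, hrc_conj]
          linear_combination (2:ℂ) * hrc2 + (-(rc*rc)) * Complex.I_sq
    · rw [if_neg hab, if_neg (fun hc => hab (hinj.mp hc)), if_neg hab]
      by_cases hx : a = invol b
      · have hy : invol a = b := by rw [hx, hinvol]
        rw [if_pos hx, if_pos hy]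
        have hbfix : invol b ≠ b := by
          intro hcon; exact hab (by rw [hx, hcon])
        have hafix : invol a ≠ a := by
          rw [hy]; intro hcon; exact hab hcon.symm
        have hfab : (f a : ℕ) ≠ f b := fun hcon => hab (f.injective (Fin.ext hcon))
        by_cases hp : (f b : ℕ) < f (invol b)
        · have hpa : ¬ ((f a : ℕ) < f (invol a)) := by
            rw [hy]; rw [hx] at hfab ⊢; omega
          simp only [hα, hβ]
          simp only [if_neg hafix, if_neg hbfix, if_neg hpa, if_pos hp]
          simp only [Complex.star_def, _root_.map_mul, map_neg, Complex.conj_I, hrc_conj]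
          linear_combination (rc*rc) * Complex.I_sq
        · have hpa : ((f a : ℕ) < f (invol a)) := by
            rw [hy]; rw [hx] at hfab ⊢; omega
          simp only [hα, hβ]
          simp only [if_neg hafix, if_neg hbfix, if_pos hpa, if_neg hp]
          simp only [Complex.star_def, _root_.map_mul, Complex.conj_I, hrc_conj]
          linear_combination (rc*rc) * Complex.I_sq
      · have hy : ¬ (invol a = b) := by
          intro hcon; exact hx (by rw [← hcon, hinvol])
        rw [if_neg hx, if_neg hy]
        try ring
  · intro k a
    have hsc : star (c k a)
        = (if k = a then star (α a) else 0) + (if k = invol a then star (β a) else 0) := by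
      rw [hc]
      simp only [Matrix.of_apply, star_add]
      congr 1
      · split <;> simp
      · split <;> simp
    rw [hsc, hconjα, hconjβ, hc]
    simp only [Matrix.of_apply]
    rw [hinvol]
    ring

end



/-- Matrix core of Theorem 3.1: SQDB (via the Fagnola–Umanità symmetric unitary `u`)
implies the existence of a special representation `(J_a)` with vanishing quantum EPR. -/
theorem sqdb_implies_zero_epr_representation
    {n : ℕ} {κ : Type*} [Fintype κ] [DecidableEq κ]
    (invol : κ → κ) (hinvol : ∀ k, invol (invol k) = k)
    (ρ : Fin n → ℝ) (hρ : ∀ i, 0 < ρ i)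
    (L : κ → Matrix (Fin n) (Fin n) ℂ)
    (u : Matrix κ κ ℂ) (hu_unitary : uᴴ * u = 1) (hu_symm : uᵀ = u)
    (hrep : ∀ k, Matrix.diagonal (fun i => (Real.sqrt (ρ i) : ℂ)) * (L k)ᴴ =
      ∑ ℓ, u k ℓ • (L ℓ * Matrix.diagonal (fun i => (Real.sqrt (ρ i) : ℂ)))) :
    ∃ (v : Matrix κ κ ℂ) (J : κ → Matrix (Fin n) (Fin n) ℂ),
      vᴴ * v = 1 ∧
      (∀ k, L k = ∑ a, v k a • J a) ∧
      (∀ k, Matrix.diagonal (fun i => (Real.sqrt (ρ i) : ℂ)) * (J k)ᴴ =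
        J (invol k) * Matrix.diagonal (fun i => (Real.sqrt (ρ i) : ℂ))) ∧
      (∀ k i j, ρ i * Complex.normSq (J k j i) = ρ j * Complex.normSq (J (invol k) i j)) := by
  classical
  obtain ⟨H, hH_unit, hH_real⟩ := exists_real_structure u hu_unitary hu_symm
  obtain ⟨c, hc_unit, hc_star⟩ := exists_pair_matrix invol hinvol
  set D : Matrix (Fin n) (Fin n) ℂ := Matrix.diagonal (fun i => (Real.sqrt (ρ i) : ℂ)) with hD
  set v : Matrix κ κ ℂ := H * c with hv
  have hv_unit : vᴴ * v = 1 := by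
    rw [hv, Matrix.conjTranspose_mul, Matrix.mul_assoc, ← Matrix.mul_assoc Hᴴ, hH_unit,
      Matrix.one_mul, hc_unit]
  have hvv : v * vᴴ = 1 := by rw [mul_eq_one_comm] at hv_unit; exact hv_unit
  have huv : ∀ k a, (u * v) k a = star (v k (invol a)) := by
    intro k a
    have h1 : (u * v) k a = ∑ ℓ, (u * H) k ℓ * c ℓ a := by
      rw [hv, ← Matrix.mul_assoc, Matrix.mul_apply]
    rw [h1]
    have h2 : star (v k (invol a)) = ∑ ℓ, star (H k ℓ) * star (c ℓ (invol a)) := by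
      rw [hv, Matrix.mul_apply, star_sum]
      exact Finset.sum_congr rfl (fun ℓ _ => by rw [star_mul'])
    rw [h2]
    refine Finset.sum_congr rfl (fun ℓ _ => ?_)
    rw [hH_real k ℓ]
    congr 1
    rw [hc_star ℓ (invol a), hinvol]
  set J : κ → Matrix (Fin n) (Fin n) ℂ := fun a => ∑ ℓ, star (v ℓ a) • L ℓ with hJ
  have bullet3 : ∀ k, D * (J k)ᴴ = J (invol k) * D := by
    intro k
    have hJH : (J k)ᴴ = ∑ ℓ, v ℓ k • (L ℓ)ᴴ := by
      rw [hJ]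
      rw [Matrix.conjTranspose_sum]
      exact Finset.sum_congr rfl (fun ℓ _ => by rw [Matrix.conjTranspose_smul, star_star])
    rw [hJH, Finset.mul_sum]
    have step1 : ∀ ℓ, D * (v ℓ k • (L ℓ)ᴴ) = ∑ m, (v ℓ k * u ℓ m) • (L m * D) := by
      intro ℓ
      rw [_root_.mul_smul_comm, hrep ℓ, Finset.smul_sum]
      exact Finset.sum_congr rfl (fun m _ => by rw [smul_smul])
    rw [Finset.sum_congr rfl (fun ℓ _ => step1 ℓ), Finset.sum_comm]
    have step2 : ∀ m, ∑ ℓ, (v ℓ k * u ℓ m) • (L m * D) = star (v m (invol k)) • (L m * D) := by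
      intro m
      rw [← Finset.sum_smul]
      congr 1
      rw [← huv m k, Matrix.mul_apply]
      have husym' : ∀ p q, u p q = u q p := by
        intro p q
        rw [← Matrix.transpose_apply u q p, hu_symm]
      exact Finset.sum_congr rfl (fun ℓ _ => by rw [husym' m ℓ]; ring)
    rw [Finset.sum_congr rfl (fun m _ => step2 m)]
    rw [hJ, Finset.sum_mul]
    exact Finset.sum_congr rfl (fun m _ => by rw [_root_.smul_mul_assoc])
  refine ⟨v, J, hv_unit, ?_, fun k => bullet3 k, ?_⟩
  · intro k
    have h1 : ∑ a, v k a • J a = ∑ a, ∑ ℓ, (v k a * star (v ℓ a)) • L ℓ := by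
      refine Finset.sum_congr rfl (fun a _ => ?_)
      rw [hJ, Finset.smul_sum]
      exact Finset.sum_congr rfl (fun ℓ _ => by rw [smul_smul])
    rw [h1, Finset.sum_comm]
    have h2 : ∀ ℓ, ∑ a, (v k a * star (v ℓ a)) • L ℓ = (v * vᴴ) k ℓ • L ℓ := by
      intro ℓ
      rw [← Finset.sum_smul, Matrix.mul_apply]
      congr 1
    rw [Finset.sum_congr rfl (fun ℓ _ => h2 ℓ), hvv]
    have h3 : ∀ ℓ, ((1 : Matrix κ κ ℂ) k ℓ) • L ℓ = if k = ℓ then L ℓ else 0 := by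
      intro ℓ
      rw [Matrix.one_apply]
      split <;> simp
    rw [Finset.sum_congr rfl (fun ℓ _ => h3 ℓ), Finset.sum_ite_eq]
    simp
  · intro k i j
    have hkey := congrArg (fun M => M i j) (bullet3 k)
    simp only [hD] at hkey
    rw [Matrix.diagonal_mul, Matrix.mul_diagonal, Matrix.conjTranspose_apply] at hkey
    rw [Complex.star_def] at hkey
    have h4 := congrArg Complex.normSq hkey
    rw [Complex.normSq_mul, Complex.normSq_mul, Complex.normSq_conj,
      Complex.normSq_ofReal, Complex.normSq_ofReal,
      Real.mul_self_sqrt (hρ i).le, Real.mul_self_sqrt (hρ j).le] at h4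
    rw [h4]
    ring
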